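/- arXiv:0802.1597 — 2 statements merged into one kernel-verified Lean document; each statement's English description precedes it below -/
import Mathlib

section
/- Let μ be a finite positive Borel measure on ℝ³, η > 0, C > 0, and A₂ = {x : μ(B(x,r)) ≥ η r / (−C log(r²)) for all 0 < r < min(1, dist(x, ∂Ω))}. Then the Hausdorff dimension of A₂ is at most 1. -/
open Real Metric MeasureTheory ENNReal NNReal

private lemma loglem12 {e δ : ℝ} (he : 0 < e) (hδ0 : 0 < δ) :
    δ ^ e * (-Real.log δ) ≤ 1 / e := by
  have h1 : 0 < δ ^ (-e) := Real.rpow_pos_of_pos hδ0 _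
  have h2 : Real.log (δ ^ (-e)) ≤ δ ^ (-e) - 1 := Real.log_le_sub_one_of_pos h1
  rw [Real.log_rpow hδ0] at h2
  have h3 : δ ^ e * δ ^ (-e) = 1 := by
    rw [← Real.rpow_add hδ0]; simp
  have h4 : 0 < δ ^ e := Real.rpow_pos_of_pos hδ0 _
  rw [le_div_iff₀ he]
  nlinarith [mul_le_mul_of_nonneg_left h2 h4.le]

private lemma realineq12 {η C e δ : ℝ} (hη : 0 < η) (hC : 0 < C) (he : 0 < e)
    (hδ0 : 0 < δ) (hδ1 : δ < 1) :
    (8 * δ) ^ (e + 1) ≤ (8 ^ (e + 1) * (2 * C) / (η * e)) * (η * δ / (-C * Real.log (δ ^ 2))) := by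
  have hlog : Real.log (δ ^ 2) = 2 * Real.log δ := by
    rw [Real.log_pow]; norm_num
  have hL : 0 < -Real.log δ := by
    have := Real.log_neg hδ0 hδ1; linarith
  have hll := loglem12 he hδ0
  have h8 : 0 < (8:ℝ) ^ (e + 1) := Real.rpow_pos_of_pos (by norm_num) _
  have hsplit : (8 * δ) ^ (e + 1) = 8 ^ (e + 1) * (δ ^ e * δ) := by
    rw [Real.mul_rpow (by norm_num) hδ0.le, Real.rpow_add hδ0, Real.rpow_one]
  have hde : 0 < δ ^ e := Real.rpow_pos_of_pos hδ0 _
  rw [hsplit, hlog]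
  have hLne : Real.log δ ≠ 0 := by linarith
  have hRHS : (8 ^ (e + 1) * (2 * C) / (η * e)) * (η * δ / (-C * (2 * Real.log δ)))
      = 8 ^ (e + 1) * (δ / (e * (-Real.log δ))) := by
    field_simp
  rw [hRHS]
  have key2 : δ ^ e * δ ≤ δ / (e * (-Real.log δ)) := by
    rw [le_div_iff₀ (by positivity)]
    have hee : e * (1/e) = 1 := by field_simp
    nlinarith [mul_le_mul_of_nonneg_left hll (mul_pos he hδ0).le, hee]
  exact mul_le_mul_of_nonneg_left key2 h8.le

private lemma keystep12 (μ : Measure (EuclideanSpace ℝ (Fin 3))) [IsFiniteMeasure μ]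
    {η C : ℝ} (hη : 0 < η) (hC : 0 < C) {d : ℝ≥0} (hd : 1 < (d : ℝ))
    {s : Set (EuclideanSpace ℝ (Fin 3))} {δ : ℝ} (hδ0 : 0 < δ) (hδ1 : δ < 1)
    (hs : ∀ x ∈ s, ENNReal.ofReal (η * δ / (-C * Real.log (δ ^ 2))) ≤ μ (ball x δ)) :
    ∃ u : Set (EuclideanSpace ℝ (Fin 3)), u.Countable ∧
      (s ⊆ ⋃ i : ↥u, closedBall (i : EuclideanSpace ℝ (Fin 3)) (4 * δ)) ∧
      ∑' i : ↥u, EMetric.diam (closedBall (i : EuclideanSpace ℝ (Fin 3)) (4 * δ)) ^ (d : ℝ)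
        ≤ ENNReal.ofReal (8 ^ (d : ℝ) * (2 * C) / (η * ((d : ℝ) - 1))) * μ Set.univ := by
  set e : ℝ := (d : ℝ) - 1 with he_def
  have he : 0 < e := by rw [he_def]; linarith
  have hde : (d : ℝ) = e + 1 := by ring
  set c : ℝ := η * δ / (-C * Real.log (δ ^ 2)) with hc_def
  have hlogneg : Real.log δ < 0 := Real.log_neg hδ0 hδ1
  have hden : 0 < -C * Real.log (δ ^ 2) := by
    rw [Real.log_pow]; push_cast; nlinarith
  have hc : 0 < c := div_pos (mul_pos hη hδ0) hden
  obtain ⟨u, hus, hdisj, hcov⟩ :=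
    Vitali.exists_disjoint_subfamily_covering_enlargement_closedBall s id (fun _ => δ) δ
      (fun a _ => le_rfl) 4 (by norm_num)
  have hμball : ∀ i : ↥u, ENNReal.ofReal c ≤ μ (ball (i : EuclideanSpace ℝ (Fin 3)) δ) :=
    fun i => hs i (hus i.2)
  have hdisj' : Pairwise (Function.onFun Disjoint fun i : ↥u => ball (i : EuclideanSpace ℝ (Fin 3)) δ) := by
    intro i j hij
    exact (hdisj i.2 j.2 (Subtype.coe_injective.ne hij)).mono ball_subset_closedBall
      ball_subset_closedBall
  have hcount : u.Countable := by
    have hct := MeasureTheory.Measure.countable_meas_pos_of_disjoint_of_meas_iUnion_ne_top μ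
      (fun i : ↥u => measurableSet_ball) hdisj'
      (ne_top_of_le_ne_top (measure_ne_top μ _) (measure_mono (Set.subset_univ _)))
    have huniv : {i : ↥u | 0 < μ (ball (i : EuclideanSpace ℝ (Fin 3)) δ)} = Set.univ :=
      Set.eq_univ_of_forall fun i => lt_of_lt_of_le (ENNReal.ofReal_pos.2 hc) (hμball i)
    rw [huniv, Set.countable_univ_iff] at hct
    exact Set.countable_coe_iff.mp hct
  haveI : Countable ↥u := hcount.to_subtype
  refine ⟨u, hcount, ?_, ?_⟩
  · intro x hx
    obtain ⟨b, hb, hsub⟩ := hcov x hx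
    exact Set.mem_iUnion.2 ⟨⟨b, hb⟩, hsub (mem_closedBall_self (by linarith))⟩
  · have hdiam : ∀ i : ↥u,
        EMetric.diam (closedBall (i : EuclideanSpace ℝ (Fin 3)) (4 * δ)) ^ (d : ℝ)
          ≤ ENNReal.ofReal ((8 * δ) ^ (d : ℝ)) := by
      intro i
      rw [← ENNReal.ofReal_rpow_of_pos (by linarith)]
      refine ENNReal.rpow_le_rpow ?_ (by positivity)
      calc EMetric.diam (closedBall (i : EuclideanSpace ℝ (Fin 3)) (4 * δ))
          ≤ 2 * ENNReal.ofReal (4 * δ) := by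
            rw [← Metric.emetric_closedBall (by linarith : (0:ℝ) ≤ 4 * δ)]
            exact EMetric.diam_closedBall
        _ = ENNReal.ofReal (8 * δ) := by
            rw [show (8:ℝ) * δ = 2 * (4 * δ) by ring,
              ENNReal.ofReal_mul (by norm_num : (0:ℝ) ≤ 2),
              ENNReal.ofReal_mul (by norm_num : (0:ℝ) ≤ 4),
              ENNReal.ofReal_ofNat, ENNReal.ofReal_ofNat]
    calc ∑' i : ↥u, EMetric.diam (closedBall (i : EuclideanSpace ℝ (Fin 3)) (4 * δ)) ^ (d : ℝ)
        ≤ ∑' i : ↥u, ENNReal.ofReal (8 ^ (d : ℝ) * (2 * C) / (η * e))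
            * μ (ball (i : EuclideanSpace ℝ (Fin 3)) δ) := by
          refine ENNReal.tsum_le_tsum fun i => (hdiam i).trans ?_
          calc ENNReal.ofReal ((8 * δ) ^ (d : ℝ))
              ≤ ENNReal.ofReal ((8 ^ (d : ℝ) * (2 * C) / (η * e)) * c) := by
                refine ENNReal.ofReal_le_ofReal ?_
                rw [hde]
                exact realineq12 hη hC he hδ0 hδ1
            _ = ENNReal.ofReal (8 ^ (d : ℝ) * (2 * C) / (η * e)) * ENNReal.ofReal c := by
                rw [ENNReal.ofReal_mul (by positivity)]
            _ ≤ _ := mul_le_mul_right (hμball i) _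
      _ = ENNReal.ofReal (8 ^ (d : ℝ) * (2 * C) / (η * e))
            * ∑' i : ↥u, μ (ball (i : EuclideanSpace ℝ (Fin 3)) δ) := ENNReal.tsum_mul_left
      _ = ENNReal.ofReal (8 ^ (d : ℝ) * (2 * C) / (η * e))
            * μ (⋃ i : ↥u, ball (i : EuclideanSpace ℝ (Fin 3)) δ) := by
          rw [measure_iUnion hdisj' fun i => measurableSet_ball]
      _ ≤ _ := mul_le_mul_right (measure_mono (Set.subset_univ _)) _

private lemma keydim12 (μ : Measure (EuclideanSpace ℝ (Fin 3))) [IsFiniteMeasure μ]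
    {η C : ℝ} (hη : 0 < η) (hC : 0 < C) {d : ℝ≥0} (hd : 1 < (d : ℝ))
    {s : Set (EuclideanSpace ℝ (Fin 3))} {δmax : ℝ} (hδm0 : 0 < δmax) (hδm1 : δmax < 1)
    (hs : ∀ x ∈ s, ∀ r : ℝ, 0 < r → r ≤ δmax →
      ENNReal.ofReal (η * r / (-C * Real.log (r ^ 2))) ≤ μ (ball x r)) :
    dimH s ≤ (d : ℝ≥0∞) := by
  set K : ℝ≥0∞ := ENNReal.ofReal (8 ^ (d : ℝ) * (2 * C) / (η * ((d : ℝ) - 1))) * μ Set.univ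
    with hK_def
  have hKtop : K ≠ ∞ := ENNReal.mul_ne_top ENNReal.ofReal_ne_top (measure_ne_top μ _)
  set δseq : ℕ → ℝ := fun n => δmax * (1/2) ^ n with hδseq
  have hδpos : ∀ n, 0 < δseq n := fun n => by positivity
  have hδle : ∀ n, δseq n ≤ δmax := by
    intro n
    have h1 : (1/2:ℝ) ^ n ≤ 1 := pow_le_one₀ (by norm_num) (by norm_num)
    have := mul_le_mul_of_nonneg_left h1 hδm0.le
    simpa [hδseq] using this
  have hδlt : ∀ n, δseq n < 1 := fun n => lt_of_le_of_lt (hδle n) hδm1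
  choose u hcnt hcov hsum using fun n : ℕ =>
    keystep12 μ hη hC hd (hδpos n) (hδlt n)
      (fun x hx => hs x hx (δseq n) (hδpos n) (hδle n))
  haveI : ∀ n, Countable ↥(u n) := fun n => (hcnt n).to_subtype
  have hH := MeasureTheory.Measure.hausdorffMeasure_le_liminf_tsum (d : ℝ) s
    (l := Filter.atTop) (fun n => ENNReal.ofReal (8 * δseq n))
    ?_ (fun n (i : ↥(u n)) => closedBall (i : EuclideanSpace ℝ (Fin 3)) (4 * δseq n)) ?_ ?_
  · have hlim : Filter.liminf
        (fun n => ∑' i : ↥(u n),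
          EMetric.diam (closedBall (i : EuclideanSpace ℝ (Fin 3)) (4 * δseq n)) ^ (d : ℝ))
        Filter.atTop ≤ K :=
      Filter.liminf_le_of_frequently_le (Filter.Frequently.of_forall fun n => hsum n)
    have hμH : μH[(d : ℝ)] s ≠ ∞ := ne_top_of_le_ne_top hKtop (hH.trans hlim)
    exact dimH_le_of_hausdorffMeasure_ne_top hμH
  · have h0 : Filter.Tendsto (fun n : ℕ => 8 * δseq n) Filter.atTop (nhds 0) := by
      have := tendsto_pow_atTop_nhds_zero_of_lt_one (by norm_num : (0:ℝ) ≤ 1/2)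
        (by norm_num : (1/2:ℝ) < 1)
      have h := this.const_mul (8 * δmax : ℝ)
      simpa [hδseq, mul_assoc, mul_comm, mul_left_comm] using h
    have := (ENNReal.continuous_ofReal.tendsto 0).comp h0
    rw [ENNReal.ofReal_zero] at this; exact this
  · refine Filter.Eventually.of_forall fun n => fun i => ?_
    calc EMetric.diam (closedBall (i : EuclideanSpace ℝ (Fin 3)) (4 * δseq n))
        ≤ 2 * ENNReal.ofReal (4 * δseq n) := by
          rw [← Metric.emetric_closedBall (by positivity : (0:ℝ) ≤ 4 * δseq n)]
          exact EMetric.diam_closedBall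
      _ = ENNReal.ofReal (8 * δseq n) := by
          rw [show (8:ℝ) * δseq n = 2 * (4 * δseq n) by ring,
            ENNReal.ofReal_mul (by norm_num : (0:ℝ) ≤ 2), ENNReal.ofReal_ofNat]
  · exact Filter.Eventually.of_forall fun n => hcov n

theorem stmt12 (Ω : Set (EuclideanSpace ℝ (Fin 3))) (hΩ : IsOpen Ω)
    (μ : Measure (EuclideanSpace ℝ (Fin 3))) [IsFiniteMeasure μ]
    (η C : ℝ) (hη : 0 < η) (hC : 0 < C)
    (A₂ : Set (EuclideanSpace ℝ (Fin 3)))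
    (hA₂ : A₂ = {x | x ∈ Ω ∧ ∀ r : ℝ, 0 < r →
      ENNReal.ofReal r < min 1 (EMetric.infEdist x Ωᶜ) →
      η * r / (-C * Real.log (r ^ 2)) ≤ (μ (ball x r)).toReal}) :
    dimH A₂ ≤ 1 := by
  by_contra hcon
  obtain ⟨d, hd1, hdlt⟩ := ENNReal.lt_iff_exists_nnreal_btwn.1 (not_le.1 hcon)
  have hd1' : (1 : ℝ) < (d : ℝ) := by exact_mod_cast hd1
  set S : ℕ → Set (EuclideanSpace ℝ (Fin 3)) := fun m =>
    {x ∈ A₂ | ENNReal.ofReal (1 / (m + 1)) < EMetric.infEdist x Ωᶜ} with hS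
  have hsub : A₂ ⊆ ⋃ m : ℕ, S m := by
    intro x hx
    have hxΩ : x ∈ Ω := by rw [hA₂] at hx; exact hx.1
    have hpos : 0 < EMetric.infEdist x Ωᶜ := by
      rw [EMetric.infEdist, EMetric.infEdist_pos_iff_notMem_closure, hΩ.isClosed_compl.closure_eq]
      simpa using hxΩ
    obtain ⟨n, hn⟩ := ENNReal.exists_inv_nat_lt hpos.ne'
    refine Set.mem_iUnion.2 ⟨n, hx, lt_of_le_of_lt ?_ hn⟩
    rw [ENNReal.ofReal_div_of_pos (by positivity), ENNReal.ofReal_one]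
    rw [show ((n:ℝ) + 1) = ((n+1 : ℕ) : ℝ) by push_cast; ring, ENNReal.ofReal_natCast]
    rw [one_div]
    exact ENNReal.inv_le_inv.2 (by exact_mod_cast Nat.le_succ n)
  have hdim : ∀ m : ℕ, dimH (S m) ≤ (d : ℝ≥0∞) := by
    intro m
    have hm0 : (0:ℝ) < 1 / (m + 2) := by positivity
    have hm1 : (1:ℝ) / (m + 2) < 1 := by
      rw [div_lt_one (by positivity)]
      have : (0:ℝ) ≤ (m : ℝ) := Nat.cast_nonneg m
      linarith
    refine keydim12 μ hη hC hd1' hm0 hm1 ?_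
    rintro x ⟨hxA, hxd⟩ r hr0 hrle
    have hm12 : (1:ℝ) / (m + 2) ≤ 1 / (m + 1) := by
      have : (0:ℝ) ≤ (m : ℝ) := Nat.cast_nonneg m
      apply one_div_le_one_div_of_le <;> linarith
    have hr1 : r < 1 := lt_of_le_of_lt hrle hm1
    rw [hA₂] at hxA
    have h1 : ENNReal.ofReal r < min 1 (EMetric.infEdist x Ωᶜ) :=
      lt_min (ENNReal.ofReal_lt_one.2 hr1)
        (lt_of_le_of_lt (ENNReal.ofReal_le_ofReal (hrle.trans hm12)) hxd)
    exact ENNReal.ofReal_le_of_le_toReal (hxA.2 r hr0 h1)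
  have hfin : dimH A₂ ≤ (d : ℝ≥0∞) := by
    calc dimH A₂ ≤ dimH (⋃ m : ℕ, S m) := dimH_mono hsub
      _ = ⨆ m : ℕ, dimH (S m) := dimH_iUnion S
      _ ≤ (d : ℝ≥0∞) := iSup_le hdim
  exact absurd (lt_of_lt_of_le hdlt hfin) (lt_irrefl _)
end

section
/- Suppose a nonnegative sequence (a_j) satisfies a_{j+1} ≤ γ a_j + C a_j (a_j + a_j u₀ + K a_j Σ_{k=0}^j a_k) for all j ≥ 0, where 0 < γ < 1, C, K, u₀ ≥ 0. Then there exist η > 0 and β̄ ∈ (γ, 1) such that a₀ ≤ η implies a_j ≤ a₀ β̄^j for all j ≥ 0. -/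
open Finset

lemma geo_aux (β : ℝ) (h0 : 0 ≤ β) (h1 : β < 1) (n : ℕ) :
    ∑ k ∈ Finset.range n, β ^ k ≤ (1 - β)⁻¹ := by
  rw [geom_sum_eq h1.ne n]
  have h2 : (β ^ n - 1) / (β - 1) = (1 - β ^ n) / (1 - β) := by
    rw [← neg_div_neg_eq]; ring_nf
  rw [h2, ← one_div]
  have hβn : 0 ≤ β ^ n := pow_nonneg h0 n
  gcongr
  · linarith

theorem stmt19 (γ C K u₀ : ℝ) (hγ : 0 < γ) (hγ1 : γ < 1)
    (hC : 0 ≤ C) (hK : 0 ≤ K) (hu₀ : 0 ≤ u₀) :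
    ∃ η > (0 : ℝ), ∃ β : ℝ, β ∈ Set.Ioo γ 1 ∧
      ∀ a : ℕ → ℝ, (∀ j, 0 ≤ a j) →
        (∀ j, a (j + 1) ≤ γ * a j +
          C * a j * (a j + a j * u₀ + K * a j * ∑ k ∈ Finset.range (j + 1), a k)) →
        a 0 ≤ η → ∀ j, a j ≤ a 0 * β ^ j := by
  set β : ℝ := (1 + γ) / 2 with hβ
  have hβγ : γ < β := by rw [hβ]; linarith
  have hβ1 : β < 1 := by rw [hβ]; linarith
  have hβ0 : 0 < β := by linarith
  set δ : ℝ := β - γ with hδ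
  have hδ0 : 0 < δ := by rw [hδ]; linarith
  set M : ℝ := C * (1 + u₀) + C * K * (1 - β)⁻¹ with hM
  have hinv : (0:ℝ) ≤ (1 - β)⁻¹ := inv_nonneg.mpr (by linarith)
  have hM0 : 0 ≤ M := by
    rw [hM]; nlinarith [mul_nonneg (mul_nonneg hC hK) hinv]
  refine ⟨min 1 (δ / (M + 1)), by positivity, β, ⟨hβγ, hβ1⟩, ?_⟩
  intro a ha hrec ha0
  have hη1 : a 0 ≤ 1 := ha0.trans (min_le_left _ _)
  have hη2 : a 0 ≤ δ / (M + 1) := ha0.trans (min_le_right _ _)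
  have key : ∀ j, ∀ k ≤ j, a k ≤ a 0 * β ^ k := by
    intro j
    induction j with
    | zero =>
      intro k hk
      interval_cases k
      simp
    | succ j ih =>
      intro k hk
      rcases Nat.lt_succ_iff_lt_or_eq.mp (Nat.lt_succ_of_le hk) with h | h
      · exact ih k (Nat.lt_succ_iff.mp h)
      · subst h
        have hsum : ∑ i ∈ Finset.range (j + 1), a i ≤ a 0 * (1 - β)⁻¹ := by
          calc ∑ i ∈ Finset.range (j + 1), a i
              ≤ ∑ i ∈ Finset.range (j + 1), a 0 * β ^ i := by
                apply Finset.sum_le_sum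
                intro i hi
                exact ih i (Nat.lt_succ_iff.mp (Finset.mem_range.mp hi))
            _ = a 0 * ∑ i ∈ Finset.range (j + 1), β ^ i := by rw [Finset.mul_sum]
            _ ≤ a 0 * (1 - β)⁻¹ := by
                exact mul_le_mul_of_nonneg_left (geo_aux β hβ0.le hβ1 _) (ha 0)
        have haj : a j ≤ a 0 * β ^ j := ih j le_rfl
        have haj1 : a j ≤ a 0 := by
          calc a j ≤ a 0 * β ^ j := haj
            _ ≤ a 0 * 1 := mul_le_mul_of_nonneg_left (pow_le_one₀ hβ0.le hβ1.le) (ha 0)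
            _ = a 0 := mul_one _
        have hstep : C * a j * (a j + a j * u₀ + K * a j * ∑ k ∈ Finset.range (j + 1), a k)
            ≤ δ * a j := by
          have h2 : a j + a j * u₀ + K * a j * ∑ k ∈ Finset.range (j + 1), a k
              ≤ a 0 * (1 + u₀) + K * a 0 * (a 0 * (1 - β)⁻¹) := by
            have hKs : K * a j * ∑ k ∈ Finset.range (j + 1), a k
                ≤ K * a 0 * (a 0 * (1 - β)⁻¹) := by
              calc K * a j * ∑ k ∈ Finset.range (j + 1), a k
                  ≤ K * a j * (a 0 * (1 - β)⁻¹) :=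
                    mul_le_mul_of_nonneg_left hsum (mul_nonneg hK (ha j))
                _ ≤ K * a 0 * (a 0 * (1 - β)⁻¹) := by
                    apply mul_le_mul_of_nonneg_right _ (mul_nonneg (ha 0) hinv)
                    exact mul_le_mul_of_nonneg_left haj1 hK
            nlinarith [mul_le_mul_of_nonneg_right haj1 (by linarith : (0:ℝ) ≤ 1 + u₀)]
          have h4 : C * (a 0 * (1 + u₀) + K * a 0 * (a 0 * (1 - β)⁻¹)) ≤ M * a 0 := by
            rw [hM]
            nlinarith [mul_le_mul_of_nonneg_left hη1
              (mul_nonneg (mul_nonneg (mul_nonneg hC hK) (ha 0)) hinv)]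
          have h5 : M * a 0 ≤ δ := by
            have h6 : a 0 ≤ δ / (M + 1) := hη2
            have h7 : a 0 * (M + 1) ≤ δ := (le_div_iff₀ (by linarith)).mp h6
            nlinarith [ha 0]
          calc C * a j * (a j + a j * u₀ + K * a j * ∑ k ∈ Finset.range (j + 1), a k)
              ≤ C * a j * (a 0 * (1 + u₀) + K * a 0 * (a 0 * (1 - β)⁻¹)) := by
                exact mul_le_mul_of_nonneg_left h2 (mul_nonneg hC (ha j))
            _ = a j * (C * (a 0 * (1 + u₀) + K * a 0 * (a 0 * (1 - β)⁻¹))) := by ring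
            _ ≤ a j * (M * a 0) := mul_le_mul_of_nonneg_left h4 (ha j)
            _ ≤ a j * δ := mul_le_mul_of_nonneg_left h5 (ha j)
            _ = δ * a j := mul_comm _ _
        calc a (j + 1) ≤ γ * a j + C * a j * (a j + a j * u₀ +
              K * a j * ∑ k ∈ Finset.range (j + 1), a k) := hrec j
          _ ≤ γ * a j + δ * a j := by linarith
          _ = β * a j := by rw [hδ]; ring
          _ ≤ β * (a 0 * β ^ j) := mul_le_mul_of_nonneg_left haj hβ0.le
          _ = a 0 * β ^ (j + 1) := by ring
  intro j
  exact key j j le_rfl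
end
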